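/- Let n ≥ 1, t ≥ 0, let g : ℝⁿ → ℝ be twice continuously differentiable, and let x* be a local minimum of g at which the Hessian ∇²g(x*) is positive definite. Suppose there are constants C₁,…,Cₙ > 0 with ∂²g/∂x_k²(x*) ≤ 1/(t + C_k⁻¹) for each k. Then the harmonic mean of the eigenvalues λ₁,…,λₙ of ∇²g(x*) satisfies HM(λ₁,…,λₙ) ≤ 1/(t + HM(C₁,…,Cₙ)⁻¹), where HM(x) = ( (1/n) Σ_{i=1}^n 1/xᵢ )⁻¹. -/

import Mathlib

open Real Matrix

/-- The harmonic mean of a vector: `HM(x) = ( (1/n) Σ 1/xᵢ )⁻¹ = n / Σ 1/xᵢ`. -/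
noncomputable def harmonicMean {n : ℕ} (x : Fin n → ℝ) : ℝ :=
  (n : ℝ) / ∑ i, (x i)⁻¹

/-- At a local minimum with positive definite Hessian, if the diagonal second
derivatives satisfy `∂²g/∂x_k² ≤ 1/(t + C_k⁻¹)`, then the harmonic mean of the
Hessian eigenvalues is at most `1/(t + HM(C)⁻¹)`. -/
theorem stmt_12 (n : ℕ) (hn : 1 ≤ n) (t : ℝ) (ht : 0 ≤ t)
    (g : EuclideanSpace ℝ (Fin n) → ℝ) (hg : ContDiff ℝ 2 g)
    (xstar : EuclideanSpace ℝ (Fin n)) (hmin : IsLocalMin g xstar)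
    (H : Matrix (Fin n) (Fin n) ℝ)
    (hH : ∀ i j, H i j
      = fderiv ℝ (fun y => fderiv ℝ g y (EuclideanSpace.single j 1)) xstar
          (EuclideanSpace.single i 1))
    (hpd : H.PosDef)
    (C : Fin n → ℝ) (hC : ∀ k, 0 < C k)
    (hdiag : ∀ k, H k k ≤ 1 / (t + (C k)⁻¹)) :
    harmonicMean (hpd.isHermitian.eigenvalues) ≤ 1 / (t + (harmonicMean C)⁻¹) := by
  classical
  set hherm := hpd.isHermitian with hherm_def
  set lam : Fin n → ℝ := hherm.eigenvalues with hlam_def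
  set U : Matrix (Fin n) (Fin n) ℝ := (hherm.eigenvectorUnitary : Matrix (Fin n) (Fin n) ℝ)
    with hU_def
  have hlampos : ∀ i, 0 < lam i := hpd.eigenvalues_pos
  -- diagonal entries via spectral theorem
  have hspec : ∀ k, H k k = ∑ i, (U k i) ^ 2 * lam i := by
    intro k
    have h := congrArg (fun M => M k k) hherm.spectral_theorem
    simp only [Unitary.conjStarAlgAut_apply, Matrix.mul_apply, Matrix.mul_diagonal, Matrix.star_apply, star_trivial,
      Function.comp_apply, RCLike.ofReal_real_eq_id, id_eq] at h
    rw [h]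
    refine Finset.sum_congr rfl fun j _ => ?_
    rw [Finset.sum_eq_single j (fun b _ hb => by
      rw [Matrix.diagonal_apply_ne _ hb, mul_zero]) (fun hj => absurd (Finset.mem_univ j) hj)]
    simp only [Matrix.diagonal_apply_eq, Function.comp_apply, id_eq, ← hU_def, ← hlam_def]
    ring
  -- row orthonormality
  have hrow : ∀ k, ∑ i, (U k i) ^ 2 = 1 := by
    intro k
    have h1 : U * star U = 1 := mem_unitaryGroup_iff.mp hherm.eigenvectorUnitary.2
    have := congrArg (fun M => M k k) h1
    simpa [Matrix.mul_apply, Matrix.one_apply, sq] using this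
  -- column orthonormality
  have hcol : ∀ i, ∑ k, (U k i) ^ 2 = 1 := by
    intro i
    have h1 : star U * U = 1 := mem_unitaryGroup_iff'.mp hherm.eigenvectorUnitary.2
    have := congrArg (fun M => M i i) h1
    simpa [Matrix.mul_apply, Matrix.one_apply, sq] using this
  set S : Fin n → ℝ := fun k => ∑ i, (U k i) ^ 2 / lam i with hS_def
  have hSnn : ∀ k, 0 ≤ S k := fun k =>
    Finset.sum_nonneg fun i _ => div_nonneg (sq_nonneg _) (hlampos i).le
  -- Cauchy–Schwarz : 1 ≤ H k k * S k
  have hcs : ∀ k, 1 ≤ H k k * S k := by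
    intro k
    have key := Finset.sum_mul_sq_le_sq_mul_sq Finset.univ
      (fun i => U k i * Real.sqrt (lam i)) (fun i => U k i / Real.sqrt (lam i))
    have e1 : ∀ i : Fin n, (U k i * Real.sqrt (lam i)) * (U k i / Real.sqrt (lam i))
        = (U k i) ^ 2 := by
      intro i
      have hs : Real.sqrt (lam i) ≠ 0 := (Real.sqrt_pos.mpr (hlampos i)).ne'
      field_simp
    have e2 : ∀ i : Fin n, (U k i * Real.sqrt (lam i)) ^ 2 = (U k i) ^ 2 * lam i := by
      intro i
      rw [mul_pow, Real.sq_sqrt (hlampos i).le]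
    have e3 : ∀ i : Fin n, (U k i / Real.sqrt (lam i)) ^ 2 = (U k i) ^ 2 / lam i := by
      intro i
      rw [div_pow, Real.sq_sqrt (hlampos i).le]
    simp only [e1, e2, e3] at key
    rw [hrow k, one_pow] at key
    rw [hspec k]
    exact key
  have hdpos : ∀ k, 0 < H k k := by
    intro k
    by_contra h
    push_neg at h
    have := hcs k
    nlinarith [hSnn k]
  -- 1/Hkk ≤ S k
  have hinv : ∀ k, 1 / H k k ≤ S k := by
    intro k
    rw [div_le_iff₀ (hdpos k)]
    linarith [hcs k, mul_comm (H k k) (S k)]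
  have htC : ∀ k, (0:ℝ) < t + (C k)⁻¹ := fun k => by
    have := inv_pos.mpr (hC k); linarith
  -- t + Ck⁻¹ ≤ 1/Hkk
  have hstep : ∀ k, t + (C k)⁻¹ ≤ 1 / H k k := by
    intro k
    rw [le_div_iff₀ (hdpos k)]
    calc (t + (C k)⁻¹) * H k k ≤ (t + (C k)⁻¹) * (1 / (t + (C k)⁻¹)) :=
          mul_le_mul_of_nonneg_left (hdiag k) (htC k).le
      _ = 1 := mul_one_div_cancel (htC k).ne'
  -- Σ S k = Σ 1/λ
  have hsumS : ∑ k, S k = ∑ i, (lam i)⁻¹ := by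
    simp only [hS_def]
    rw [Finset.sum_comm]
    refine Finset.sum_congr rfl fun i _ => ?_
    rw [← Finset.sum_div, hcol i, one_div]
  have hmain : (n : ℝ) * t + ∑ k, (C k)⁻¹ ≤ ∑ i, (lam i)⁻¹ := by
    have h1 : ∑ k, (t + (C k)⁻¹) ≤ ∑ k, (1 / H k k) :=
      Finset.sum_le_sum fun k _ => hstep k
    have h2 : ∑ k : Fin n, (1 / H k k) ≤ ∑ k, S k :=
      Finset.sum_le_sum fun k _ => hinv k
    have h3 : ∑ k : Fin n, (t + (C k)⁻¹) = (n : ℝ) * t + ∑ k, (C k)⁻¹ := by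
      rw [Finset.sum_add_distrib, Finset.sum_const, Finset.card_univ, Fintype.card_fin,
        nsmul_eq_mul]
    rw [← h3, ← hsumS]
    exact h1.trans h2
  -- finish
  have hnpos : (0:ℝ) < n := by exact_mod_cast hn
  have hBpos : 0 < ∑ k, (C k)⁻¹ := by
    apply Finset.sum_pos (fun k _ => inv_pos.mpr (hC k))
    have : Nonempty (Fin n) := ⟨⟨0, by omega⟩⟩
    exact Finset.univ_nonempty
  have hApos : 0 < ∑ i, (lam i)⁻¹ := by
    have : Nonempty (Fin n) := ⟨⟨0, by omega⟩⟩
    exact Finset.sum_pos (fun i _ => inv_pos.mpr (hlampos i)) Finset.univ_nonempty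
  unfold harmonicMean
  rw [inv_div]
  have hden : (0:ℝ) < t + (∑ k, (C k)⁻¹) / n := by
    have := div_pos hBpos hnpos; linarith
  rw [div_le_div_iff₀ hApos hden]
  have heq : (n:ℝ) * (t + (∑ k, (C k)⁻¹) / n) = (n:ℝ) * t + ∑ k, (C k)⁻¹ := by
    rw [mul_add, mul_div_cancel₀ _ hnpos.ne']
  rw [heq, one_mul]
  linarith [hmain]
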